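/- Let the parameters of the bivariate generalized Cauchy model satisfy ρ² ≤ (β11·β22/β12²)·(s11^{α11}·s22^{α22}/s12^{2α12}) · inf_{r>0} [ r^{α11+α22−2α12} · p^{(1)}_{α11,β11,s11}(r)·p^{(1)}_{α22,β22,s22}(r) / (p^{(1)}_{α12,β12,s12}(r))² ], where the infimum is taken over all r > 0 with p^{(1)}_{α12,β12,s12}(r) ≠ 0. Then the bivariate generalized Cauchy model C is positive definite in ℝ. -/

import Mathlib

open Matrix Set

noncomputable section

/-- A `2×2`-matrix-valued function `C` on `[0,∞)` is positive definite in `ℝⁿ` if for all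
finitely many points `x₁,…,x_p ∈ ℝⁿ` and vectors `a₁,…,a_p ∈ ℝ²`,
`∑_{i,j} aᵢᵀ C(‖xᵢ - xⱼ‖) aⱼ ≥ 0`. -/
def PosDefIn (n : ℕ) (C : ℝ → Matrix (Fin 2) (Fin 2) ℝ) : Prop :=
  ∀ (p : ℕ) (x : Fin p → EuclideanSpace ℝ (Fin n)) (a : Fin p → Fin 2 → ℝ),
    0 ≤ ∑ i : Fin p, ∑ j : Fin p, a i ⬝ᵥ (C ‖x i - x j‖).mulVec (a j)

/-- The auxiliary function
`p⁽¹⁾_{α,β,s}(r) = ((β+1)(sr)^α - α + 1) / (1+(sr)^α)^{β/α+2}`. -/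
def p1 (α β s r : ℝ) : ℝ :=
  ((β + 1) * (s * r) ^ α - α + 1) / (1 + (s * r) ^ α) ^ (β / α + 2)

open Real MeasureTheory Finset


noncomputable def GG (α β s r : ℝ) : ℝ := (1 + (s * r) ^ α) ^ (-(β / α))
noncomputable def GP (α β s t : ℝ) : ℝ :=
  -(β * s ^ α) * (t ^ (α - 1) * (1 + (s * t) ^ α) ^ (-(β / α) - 1))
noncomputable def HH (α β s t : ℝ) : ℝ := β * s ^ α * (t ^ (α - 2) * p1 α β s t)

lemma hasDerivAt_inner {α s t : ℝ} (hs : 0 < s) (ht : 0 < t) :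
    HasDerivAt (fun t : ℝ => (s * t) ^ α) (s * α * (s * t) ^ (α - 1)) t := by
  have h : HasDerivAt (fun t : ℝ => s * t) s t := by
    simpa using (hasDerivAt_id t).const_mul s
  have := h.rpow_const (p := α) (Or.inl (by positivity))
  convert this using 1

lemma hasDerivAt_GG {α β s t : ℝ} (hα : 0 < α) (hs : 0 < s) (ht : 0 < t) :
    HasDerivAt (GG α β s) (GP α β s t) t := by
  have h1 : HasDerivAt (fun t : ℝ => 1 + (s * t) ^ α)
      (s * α * (s * t) ^ (α - 1)) t := (hasDerivAt_inner hs ht).const_add 1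
  have hpos : (0:ℝ) < 1 + (s * t) ^ α := by positivity
  have := h1.rpow_const (p := -(β / α)) (Or.inl hpos.ne')
  convert this using 1
  · rfl
  have e1 : (s * t) ^ (α - 1) = s ^ α / s * (t ^ α / t) := by
    rw [Real.mul_rpow hs.le ht.le, Real.rpow_sub hs, Real.rpow_sub ht,
      Real.rpow_one, Real.rpow_one]
  have e2 : t ^ (α - 1) = t ^ α / t := by rw [Real.rpow_sub ht, Real.rpow_one]
  rw [GP, e1, e2]
  field_simp

lemma hasDerivAt_GP {α β s t : ℝ} (hα : 0 < α) (hs : 0 < s) (ht : 0 < t) :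
    HasDerivAt (GP α β s) (HH α β s t) t := by
  have hpos : (0:ℝ) < 1 + (s * t) ^ α := by positivity
  have h1 : HasDerivAt (fun t : ℝ => 1 + (s * t) ^ α)
      (s * α * (s * t) ^ (α - 1)) t := (hasDerivAt_inner hs ht).const_add 1
  have h2 : HasDerivAt (fun t : ℝ => (1 + (s * t) ^ α) ^ (-(β / α) - 1))
      (s * α * (s * t) ^ (α - 1) * (-(β / α) - 1) * (1 + (s * t) ^ α) ^ (-(β / α) - 1 - 1)) t :=
    h1.rpow_const (Or.inl hpos.ne')
  have h3 : HasDerivAt (fun t : ℝ => t ^ (α - 1)) ((α - 1) * t ^ (α - 1 - 1)) t :=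
    Real.hasDerivAt_rpow_const (Or.inl ht.ne')
  have h4 := (h3.mul h2).const_mul (-(β * s ^ α))
  convert h4 using 1
  · rfl
  · rfl
  · rfl
  have hX : (s * t) ^ α = s ^ α * t ^ α := Real.mul_rpow hs.le ht.le
  have e1 : (s * t) ^ (α - 1) = s ^ α / s * (t ^ α / t) := by
    rw [Real.mul_rpow hs.le ht.le, Real.rpow_sub hs, Real.rpow_sub ht,
      Real.rpow_one, Real.rpow_one]
  have e2 : t ^ (α - 1) = t ^ α / t := by rw [Real.rpow_sub ht, Real.rpow_one]
  have e3 : t ^ (α - 2) = t ^ α / t / t := by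
    rw [show α - 2 = α - 1 - 1 by ring, Real.rpow_sub ht, Real.rpow_sub ht,
      Real.rpow_one]
  have e4 : t ^ (α - 1 - 1) = t ^ α / t / t := by
    rw [Real.rpow_sub ht, Real.rpow_sub ht, Real.rpow_one]
  have e5 : (1 + (s * t) ^ α) ^ (-(β / α) - 1)
      = (1 + (s * t) ^ α) * (1 + (s * t) ^ α) ^ (-(β / α) - 1 - 1) := by
    have h := Real.rpow_add hpos 1 (-(β / α) - 1 - 1)
    rw [Real.rpow_one] at h
    rw [← h]
    congr 1
    ring
  have e6 : (1 + (s * t) ^ α) ^ (β / α + 2) = ((1 + (s * t) ^ α) ^ (-(β / α) - 1 - 1))⁻¹ := by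
    rw [show -(β / α) - 1 - 1 = -(β / α + 2) by ring, Real.rpow_neg hpos.le, inv_inv]
  have hDpos : (0:ℝ) < (1 + (s * t) ^ α) ^ (-(β / α) - 1 - 1) := Real.rpow_pos_of_pos hpos _
  rw [HH, p1, e6, e1, e2, e3, e4, e5, hX]
  set D := (1 + s ^ α * t ^ α) ^ (-(β / α) - 1 - 1) with hD
  field_simp
  ring
lemma p1_nonneg {α β s t : ℝ} (hα : 0 < α) (hα1 : α ≤ 1) (hβ : 0 < β)
    (hs : 0 < s) (ht : 0 < t) : 0 ≤ p1 α β s t := by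
  have hx : (0:ℝ) ≤ (s * t) ^ α := Real.rpow_nonneg (by positivity) _
  have hpos : (0:ℝ) < 1 + (s * t) ^ α := by linarith
  apply div_nonneg
  · nlinarith
  · exact (Real.rpow_pos_of_pos hpos _).le

lemma p1_abs_le_small {α β s t : ℝ} (hα : 0 < α) (hα2 : α ≤ 2) (hβ : 0 < β)
    (hs : 0 < s) (ht : 0 < t) (ht1 : t ≤ 1) :
    |p1 α β s t| ≤ (β + 1) * s ^ α + 2 := by
  have hx : (0:ℝ) ≤ (s * t) ^ α := Real.rpow_nonneg (by positivity) _
  have hxle : (s * t) ^ α ≤ s ^ α := by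
    rw [Real.mul_rpow hs.le ht.le]
    nlinarith [Real.rpow_le_one ht.le ht1 hα.le, Real.rpow_pos_of_pos hs α,
      Real.rpow_nonneg ht.le α]
  have hpos : (0:ℝ) < 1 + (s * t) ^ α := by linarith
  have hden : (1:ℝ) ≤ (1 + (s * t) ^ α) ^ (β / α + 2) :=
    Real.one_le_rpow (by linarith) (by positivity)
  have hnum : |(β + 1) * (s * t) ^ α - α + 1| ≤ (β + 1) * s ^ α + 2 := by
    rw [abs_le]
    constructor <;> nlinarith [Real.rpow_pos_of_pos hs α]
  rw [p1, abs_div, abs_of_pos (Real.rpow_pos_of_pos hpos _)]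
  exact le_trans (div_le_self (abs_nonneg _) hden) hnum

lemma p1_abs_le_large {α β s t : ℝ} (hα : 0 < α) (hα2 : α ≤ 2) (hβ : 0 < β)
    (hs : 0 < s) (ht : 1 ≤ t) :
    |p1 α β s t| ≤ (((β + 1) + (s ^ α)⁻¹) * s ^ (-β - α)) * t ^ (-β - α) := by
  have ht0 : (0:ℝ) < t := lt_of_lt_of_le one_pos ht
  have hx0 : (0:ℝ) < s ^ α := Real.rpow_pos_of_pos hs α
  have hxpos : (0:ℝ) < (s * t) ^ α := Real.rpow_pos_of_pos (by positivity) α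
  have hx0le : s ^ α ≤ (s * t) ^ α := by
    apply Real.rpow_le_rpow hs.le _ hα.le
    nlinarith
  have hpos : (0:ℝ) < 1 + (s * t) ^ α := by linarith
  set x := (s * t) ^ α with hxdef
  -- numerator bound
  have hnum : |(β + 1) * x - α + 1| ≤ ((β + 1) + (s ^ α)⁻¹) * x := by
    have h1 : (1:ℝ) ≤ (s ^ α)⁻¹ * x := by
      rw [inv_mul_eq_div]
      exact (one_le_div hx0).mpr hx0le
    have h2 : (0:ℝ) < (s ^ α)⁻¹ := by positivity
    rw [abs_le]
    constructor <;> nlinarith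
  -- denominator bound
  have hden : x ^ (β / α + 2) ≤ (1 + x) ^ (β / α + 2) :=
    Real.rpow_le_rpow hxpos.le (by linarith) (by positivity)
  have hxpow : x ^ (-(β / α) - 1) = s ^ (-β - α) * t ^ (-β - α) := by
    rw [hxdef, ← Real.rpow_mul (by positivity : (0:ℝ) ≤ s * t),
      show α * (-(β / α) - 1) = -β - α by field_simp,
      Real.mul_rpow hs.le ht0.le]
  have hd2 : (0:ℝ) < x ^ (β / α + 2) := Real.rpow_pos_of_pos hxpos _
  have hd3 : (0:ℝ) < (1 + x) ^ (β / α + 2) := Real.rpow_pos_of_pos hpos _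
  have hxx : x / x ^ (β / α + 2) = x ^ (-(β / α) - 1) := by
    have h := Real.rpow_sub hxpos 1 (β / α + 2)
    rw [Real.rpow_one] at h
    rw [← h]
    congr 1
    ring
  rw [p1, abs_div, abs_of_pos hd3, ← hxdef]
  calc |(β + 1) * x - α + 1| / (1 + x) ^ (β / α + 2)
      ≤ ((β + 1 + (s ^ α)⁻¹) * x) / (1 + x) ^ (β / α + 2) := by
        gcongr
    _ ≤ ((β + 1 + (s ^ α)⁻¹) * x) / x ^ (β / α + 2) := by
        gcongr
    _ = (β + 1 + (s ^ α)⁻¹) * (x / x ^ (β / α + 2)) := by ring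
    _ = (((β + 1) + (s ^ α)⁻¹) * s ^ (-β - α)) * t ^ (-β - α) := by
        rw [hxx, hxpow]; ring
lemma p1_continuousOn {α β s : ℝ} (hs : 0 < s) :
    ContinuousOn (fun t => p1 α β s t) (Ioi (0:ℝ)) := by
  have hst : ContinuousOn (fun t : ℝ => (s * t) ^ α) (Ioi 0) := by
    apply ContinuousOn.rpow_const (by fun_prop)
    intro t ht
    exact Or.inl (mul_pos hs ht).ne'
  apply ContinuousOn.div
  · exact ((hst.const_smul (β + 1)).sub continuousOn_const).add continuousOn_const
  · apply ContinuousOn.rpow_const (continuousOn_const.add hst)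
    intro t ht
    have h2 : (0:ℝ) ≤ (s * t) ^ α := Real.rpow_nonneg (mul_pos hs ht).le _
    exact Or.inl (by linarith : (0:ℝ) < 1 + (s * t) ^ α).ne'
  · intro t ht
    have h2 : (0:ℝ) ≤ (s * t) ^ α := Real.rpow_nonneg (mul_pos hs ht).le _
    exact (Real.rpow_pos_of_pos (by linarith) _).ne'

lemma integrand_continuousOn {α β s : ℝ} (hs : 0 < s) (r : ℝ) :
    ContinuousOn (fun t => max (t - r) 0 * (t ^ (α - 2) * p1 α β s t)) (Ioi (0:ℝ)) := by
  apply ContinuousOn.mul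
  · exact ((continuous_id.sub continuous_const).max continuous_const).continuousOn
  · apply ContinuousOn.mul
    · apply ContinuousOn.rpow_const continuousOn_id
      intro t ht
      exact Or.inl (ne_of_gt ht)
    · exact p1_continuousOn hs

lemma tent_kernel (p : ℕ) (y : Fin p → ℝ) (b : Fin p → ℝ) (t : ℝ) :
    0 ≤ ∑ i : Fin p, ∑ j : Fin p, max (t - |y i - y j|) 0 * (b i * b j) := by
  set f : Fin p → ℝ → ℝ := fun i => (Ico (y i) (y i + t)).indicator 1 with hf
  have hprod : ∀ i j : Fin p, (fun u => f i u * f j u)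
      = (Ico (y i) (y i + t) ∩ Ico (y j) (y j + t)).indicator 1 := by
    intro i j
    rw [Set.inter_indicator_one]
    rfl
  have hint : ∀ i j : Fin p, Integrable (fun u => f i u * f j u) := by
    intro i j
    rw [hprod]
    rw [integrable_indicator_iff (by measurability)]
    refine integrableOn_const (ne_of_lt ?_)
    calc volume (Ico (y i) (y i + t) ∩ Ico (y j) (y j + t))
        ≤ volume (Ico (y i) (y i + t)) := measure_mono inter_subset_left
      _ < ⊤ := by rw [Real.volume_Ico]; exact ENNReal.ofReal_lt_top
  have key : ∀ i j : Fin p, ∫ u, f i u * f j u = max (t - |y i - y j|) 0 := by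
    intro i j
    rw [hprod, MeasureTheory.integral_indicator_one (by measurability)]
    rw [Set.Ico_inter_Ico, Real.volume_real_Ico]
    congr 1
    rw [min_add_add_right]
    rcases le_total (y i) (y j) with h | h
    · rw [min_eq_left h, max_eq_right h, abs_sub_comm, abs_of_nonneg (by linarith)]
      ring
    · rw [min_eq_right h, max_eq_left h, abs_of_nonneg (by linarith)]
      ring
  have h0 : 0 ≤ ∫ u, (∑ i : Fin p, b i * f i u) ^ 2 :=
    integral_nonneg fun u => sq_nonneg _
  have hexp : ∀ u : ℝ, (∑ i : Fin p, b i * f i u) ^ 2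
      = ∑ i : Fin p, ∑ j : Fin p, (b i * b j) * (f i u * f j u) := by
    intro u
    rw [sq, Finset.sum_mul_sum]
    exact Finset.sum_congr rfl fun i _ => Finset.sum_congr rfl fun j _ => by ring
  rw [show (fun u => (∑ i : Fin p, b i * f i u) ^ 2)
      = fun u => ∑ i : Fin p, ∑ j : Fin p, (b i * b j) * (f i u * f j u)
      from funext hexp] at h0
  rw [integral_finset_sum _ (fun i _ => integrable_finset_sum _
    (fun j _ => ((hint i j).const_mul _)))] at h0
  calc (0:ℝ) ≤ ∑ i : Fin p, ∫ u, ∑ j : Fin p, (b i * b j) * (f i u * f j u) := h0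
    _ = ∑ i : Fin p, ∑ j : Fin p, max (t - |y i - y j|) 0 * (b i * b j) := by
        refine Finset.sum_congr rfl fun i _ => ?_
        rw [integral_finset_sum _ (fun j _ => ((hint i j).const_mul _))]
        refine Finset.sum_congr rfl fun j _ => ?_
        rw [MeasureTheory.integral_const_mul, key i j, mul_comm]

lemma schur_step (p : ℕ) (K : Fin p → Fin p → ℝ)
    (hK : ∀ b : Fin p → ℝ, 0 ≤ ∑ i : Fin p, ∑ j : Fin p, K i j * (b i * b j))
    (A B C : ℝ) (hA : 0 ≤ A) (hC : 0 ≤ C) (hB : B ^ 2 ≤ A * C)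
    (u v : Fin p → ℝ) :
    0 ≤ ∑ i : Fin p, ∑ j : Fin p, K i j *
      (A * (u i * u j) + B * (u i * v j) + B * (v i * u j) + C * (v i * v j)) := by
  rcases eq_or_lt_of_le hA with h0 | h0
  · have hB0 : B = 0 := by nlinarith [sq_nonneg B]
    have h := hK v
    calc (0:ℝ) ≤ C * ∑ i : Fin p, ∑ j : Fin p, K i j * (v i * v j) :=
        mul_nonneg hC h
      _ = _ := by
        rw [Finset.mul_sum]
        refine Finset.sum_congr rfl fun i _ => ?_
        rw [Finset.mul_sum]
        refine Finset.sum_congr rfl fun j _ => ?_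
        rw [← h0, hB0]; ring
  · set sa := Real.sqrt A with hsadef
    have hsa : sa ^ 2 = A := Real.sq_sqrt hA
    have hsapos : 0 < sa := Real.sqrt_pos.2 h0
    set sc := Real.sqrt ((A * C - B ^ 2) / A) with hscdef
    have hsc : sc ^ 2 = (A * C - B ^ 2) / A :=
      Real.sq_sqrt (div_nonneg (by linarith) hA)
    set b := fun i => sa * u i + (B / sa) * v i with hbdef
    set c := fun i => sc * v i with hcdef
    have hsb : sa * (B / sa) = B := by field_simp
    have hcoef : (B / sa) ^ 2 + sc ^ 2 = C := by
      rw [div_pow, hsa, hsc]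
      field_simp
      ring
    have hid : ∀ i j : Fin p,
        A * (u i * u j) + B * (u i * v j) + B * (v i * u j) + C * (v i * v j)
        = b i * b j + c i * c j := by
      intro i j
      have : b i * b j + c i * c j = sa ^ 2 * (u i * u j)
          + (sa * (B / sa)) * (u i * v j) + (sa * (B / sa)) * (v i * u j)
          + ((B / sa) ^ 2 + sc ^ 2) * (v i * v j) := by
        simp only [hbdef, hcdef]; ring
      rw [this, hsa, hsb, hcoef]
    calc (0:ℝ) ≤ (∑ i : Fin p, ∑ j : Fin p, K i j * (b i * b j))
        + ∑ i : Fin p, ∑ j : Fin p, K i j * (c i * c j) := add_nonneg (hK b) (hK c)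
      _ = _ := by
        rw [← Finset.sum_add_distrib]
        refine Finset.sum_congr rfl fun i _ => ?_
        rw [← Finset.sum_add_distrib]
        refine Finset.sum_congr rfl fun j _ => ?_
        rw [hid i j]; ring

lemma integrable_tent {α β s : ℝ} (hα : 0 < α) (hα2 : α ≤ 2) (hβ : 0 < β) (hs : 0 < s)
    {r : ℝ} (hr : 0 ≤ r) :
    IntegrableOn (fun t => max (t - r) 0 * (t ^ (α - 2) * p1 α β s t)) (Ioi (0:ℝ)) := by
  have hcont := integrand_continuousOn (α := α) (β := β) hs r
  rw [← Ioc_union_Ioi_eq_Ioi (zero_le_one (α := ℝ))]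
  apply IntegrableOn.union
  · -- small t
    have hg : IntegrableOn (fun t : ℝ => ((β + 1) * s ^ α + 2) * t ^ (α - 1))
        (Ioc (0:ℝ) 1) := by
      have := intervalIntegral.intervalIntegrable_rpow' (a := 0) (b := 1)
        (show (-1:ℝ) < α - 1 by linarith)
      rw [intervalIntegrable_iff_integrableOn_Ioc_of_le zero_le_one] at this
      exact this.const_mul _
    apply Integrable.mono' hg
      ((hcont.mono Ioc_subset_Ioi_self).aestronglyMeasurable measurableSet_Ioc)
    filter_upwards [ae_restrict_mem measurableSet_Ioc] with t ht
    obtain ⟨ht0, ht1⟩ := ht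
    have htp : (0:ℝ) < t ^ (α - 2) := Real.rpow_pos_of_pos ht0 _
    have hmax0 : (0:ℝ) ≤ max (t - r) 0 := le_max_right _ _
    have hmaxt : max (t - r) 0 ≤ t := max_le (by linarith) ht0.le
    have hp1 : |p1 α β s t| ≤ (β + 1) * s ^ α + 2 :=
      p1_abs_le_small hα hα2 hβ hs ht0 ht1
    have ht2 : t * t ^ (α - 2) = t ^ (α - 1) := by
      rw [show α - 1 = (α - 2) + 1 by ring, Real.rpow_add_one ht0.ne']
      ring
    rw [Real.norm_eq_abs, abs_mul, abs_mul, abs_of_nonneg hmax0, abs_of_pos htp]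
    calc max (t - r) 0 * (t ^ (α - 2) * |p1 α β s t|)
        ≤ t * (t ^ (α - 2) * ((β + 1) * s ^ α + 2)) := by
          apply mul_le_mul hmaxt _ (by positivity) ht0.le
          exact mul_le_mul_of_nonneg_left hp1 htp.le
      _ = ((β + 1) * s ^ α + 2) * t ^ (α - 1) := by rw [← ht2]; ring
  · -- large t
    set C2 : ℝ := ((β + 1) + (s ^ α)⁻¹) * s ^ (-β - α) with hC2
    have hC2n : 0 ≤ C2 := by positivity
    have hg : IntegrableOn (fun t : ℝ => C2 * t ^ (-β - 1)) (Ioi (1:ℝ)) :=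
      (integrableOn_Ioi_rpow_of_lt (by linarith) one_pos).const_mul _
    apply Integrable.mono' hg
      ((hcont.mono (Ioi_subset_Ioi zero_le_one)).aestronglyMeasurable measurableSet_Ioi)
    filter_upwards [ae_restrict_mem measurableSet_Ioi] with t ht
    have ht1 : (1:ℝ) ≤ t := le_of_lt ht
    have ht0 : (0:ℝ) < t := lt_of_lt_of_le one_pos ht1
    have htp : (0:ℝ) < t ^ (α - 2) := Real.rpow_pos_of_pos ht0 _
    have hmax0 : (0:ℝ) ≤ max (t - r) 0 := le_max_right _ _
    have hmaxt : max (t - r) 0 ≤ t := max_le (by linarith) ht0.le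
    have hp1 : |p1 α β s t| ≤ C2 * t ^ (-β - α) :=
      p1_abs_le_large hα hα2 hβ hs ht1
    have hkey : t * (t ^ (α - 2) * (C2 * t ^ (-β - α))) = C2 * t ^ (-β - 1) := by
      rw [show (-β - 1 : ℝ) = 1 + (α - 2) + (-β - α) by ring]
      rw [Real.rpow_add ht0, Real.rpow_add ht0, Real.rpow_one]
      ring
    rw [Real.norm_eq_abs, abs_mul, abs_mul, abs_of_nonneg hmax0, abs_of_pos htp]
    calc max (t - r) 0 * (t ^ (α - 2) * |p1 α β s t|)
        ≤ t * (t ^ (α - 2) * (C2 * t ^ (-β - α))) := by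
          apply mul_le_mul hmaxt _ (by positivity) ht0.le
          exact mul_le_mul_of_nonneg_left hp1 htp.le
      _ = C2 * t ^ (-β - 1) := hkey

lemma tendsto_F {α β s : ℝ} {r : ℝ} (hr : 0 ≤ r) (hα : 0 < α) (hβ : 0 < β) (hs : 0 < s) :
    Filter.Tendsto (fun t => GG α β s t - (t - r) * GP α β s t)
      Filter.atTop (nhds 0) := by
  have hinner : Filter.Tendsto (fun t : ℝ => (s * t) ^ α) Filter.atTop Filter.atTop :=
    (tendsto_rpow_atTop hα).comp (Filter.tendsto_id.const_mul_atTop hs)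
  have h1 : Filter.Tendsto (fun t : ℝ => 1 + (s * t) ^ α) Filter.atTop Filter.atTop :=
    Filter.tendsto_atTop_add_const_left _ 1 hinner
  have hGG : Filter.Tendsto (fun t => GG α β s t) Filter.atTop (nhds 0) := by
    have := (tendsto_rpow_neg_atTop (by positivity : 0 < β / α)).comp h1
    simpa [GG, Function.comp_def] using this
  have hb : ∀ᶠ t in Filter.atTop,
      ‖(t - r) * GP α β s t‖ ≤ (β * s ^ (-β)) * t ^ (-β) := by
    filter_upwards [Filter.eventually_ge_atTop (1:ℝ), Filter.eventually_ge_atTop r]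
      with t ht1 hrt
    have ht0 : (0:ℝ) < t := lt_of_lt_of_le one_pos ht1
    have hxpos : (0:ℝ) < (s * t) ^ α := Real.rpow_pos_of_pos (mul_pos hs ht0) _
    have hzpos : (0:ℝ) < (1 + (s * t) ^ α) ^ (-(β / α) - 1) :=
      Real.rpow_pos_of_pos (by linarith) _
    have htpow : (0:ℝ) < t ^ (α - 1) := Real.rpow_pos_of_pos ht0 _
    have hzle : (1 + (s * t) ^ α) ^ (-(β / α) - 1) ≤ s ^ (-β - α) * t ^ (-β - α) := by
      have h1 : (1 + (s * t) ^ α) ^ (-(β / α) - 1) ≤ ((s * t) ^ α) ^ (-(β / α) - 1) :=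
        Real.rpow_le_rpow_of_nonpos hxpos (by linarith)
          (by linarith [div_pos hβ hα] : -(β / α) - 1 ≤ 0)
      have h2 : ((s * t) ^ α) ^ (-(β / α) - 1) = s ^ (-β - α) * t ^ (-β - α) := by
        rw [← Real.rpow_mul (mul_pos hs ht0).le,
          show α * (-(β / α) - 1) = -β - α by field_simp,
          Real.mul_rpow hs.le ht0.le]
      exact h1.trans_eq h2
    have hGPabs : |GP α β s t|
        = β * s ^ α * (t ^ (α - 1) * (1 + (s * t) ^ α) ^ (-(β / α) - 1)) := by
      rw [GP, abs_mul, abs_neg, abs_of_nonneg (by positivity : (0:ℝ) ≤ β * s ^ α),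
        abs_of_nonneg (mul_nonneg htpow.le hzpos.le)]
    rw [Real.norm_eq_abs, abs_mul, abs_of_nonneg (by linarith : (0:ℝ) ≤ t - r), hGPabs]
    calc (t - r) * (β * s ^ α * (t ^ (α - 1) * (1 + (s * t) ^ α) ^ (-(β / α) - 1)))
        ≤ t * (β * s ^ α * (t ^ (α - 1) * (s ^ (-β - α) * t ^ (-β - α)))) := by
          gcongr
          · linarith
      _ = (β * s ^ (-β)) * t ^ (-β) := by
          rw [show (-β:ℝ) = 1 + (α - 1) + (-β - α) by ring, Real.rpow_add ht0,
            Real.rpow_add ht0, Real.rpow_one,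
            show s ^ (1 + (α - 1) + (-β - α)) = s ^ α * s ^ (-β - α) by
              rw [← Real.rpow_add hs]; congr 1; ring]
          ring
  have hGP : Filter.Tendsto (fun t => (t - r) * GP α β s t) Filter.atTop (nhds 0) := by
    apply squeeze_zero_norm' hb
    have := ((tendsto_rpow_neg_atTop hβ).const_mul (β * s ^ (-β)))
    simpa using this
  simpa using hGG.sub hGP

lemma mul_rpow_sub_one {α : ℝ} (hα : 0 < α) {t : ℝ} (ht : 0 ≤ t) :
    t * t ^ (α - 1) = t ^ α := by
  rcases ht.eq_or_lt with h | h
  · rw [← h]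
    rcases eq_or_ne α 1 with h1 | h1
    · simp [h1]
    · rw [Real.zero_rpow (by intro hc; exact h1 (by linarith) : α - 1 ≠ 0),
        Real.zero_rpow hα.ne']
      ring
  · rw [show α = (α - 1) + 1 by ring, Real.rpow_add_one h.ne']
    ring

lemma repr_GG {α β s : ℝ} (hα : 0 < α) (hα2 : α ≤ 2) (hβ : 0 < β) (hs : 0 < s)
    {r : ℝ} (hr : 0 ≤ r) :
    ∫ t in Ioi (0:ℝ), max (t - r) 0 * HH α β s t = GG α β s r := by
  have hfun : (fun t => max (t - r) 0 * HH α β s t)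
      = fun t => (β * s ^ α) * (max (t - r) 0 * (t ^ (α - 2) * p1 α β s t)) := by
    funext t; rw [HH]; ring
  have baseI : IntegrableOn (fun t => max (t - r) 0 * HH α β s t) (Ioi 0) := by
    rw [hfun]
    exact (integrable_tent hα hα2 hβ hs hr).const_mul _
  set F : ℝ → ℝ := fun t => GG α β s t - (t - r) * GP α β s t with hF
  have hderiv : ∀ t ∈ Ioi r, HasDerivAt F (-((t - r) * HH α β s t)) t := by
    intro t ht
    have ht0 : 0 < t := lt_of_le_of_lt hr ht
    have h1 := hasDerivAt_GG (β := β) hα hs ht0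
    have h2 := ((hasDerivAt_id t).sub_const r).mul (hasDerivAt_GP (β := β) hα hs ht0)
    have h3 := h1.sub h2
    convert h3 using 1
    · rfl
    · rfl
    · rfl
    simp only [id_eq]
    ring
  have hintr : IntegrableOn (fun t => -((t - r) * HH α β s t)) (Ioi r) := by
    have h1 : IntegrableOn (fun t => max (t - r) 0 * HH α β s t) (Ioi r) :=
      baseI.mono_set (Ioi_subset_Ioi hr)
    have h2 : IntegrableOn (fun t => (t - r) * HH α β s t) (Ioi r) := by
      apply h1.congr_fun _ measurableSet_Ioi
      intro t ht
      simp only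
      rw [max_eq_left (by linarith [mem_Ioi.mp ht] : (0:ℝ) ≤ t - r)]
    exact h2.neg
  have hcont : ContinuousWithinAt F (Ici r) r := by
    rcases hr.eq_or_lt with h0 | h0
    · -- r = 0
      subst h0
      have hst0 : ContinuousAt (fun t : ℝ => (s * t) ^ α) 0 := by
        have hc : ContinuousAt (fun t : ℝ => s * t) 0 := by fun_prop
        have := (Real.continuousAt_rpow_const (s * 0) α (Or.inr hα.le)).comp hc
        simpa [Function.comp_def] using this
      have hbase : ContinuousAt (fun t : ℝ => 1 + (s * t) ^ α) 0 :=
        continuousAt_const.add hst0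
      have hb0 : (1 : ℝ) + (s * 0) ^ α = 1 := by
        rw [mul_zero, Real.zero_rpow hα.ne']; ring
      have hGGc : ContinuousAt (GG α β s) 0 := by
        apply ContinuousAt.rpow_const hbase
        left
        rw [hb0]; norm_num
      have hZc : ContinuousAt (fun t : ℝ => (1 + (s * t) ^ α) ^ (-(β / α) - 1)) 0 := by
        apply ContinuousAt.rpow_const hbase
        left
        rw [hb0]; norm_num
      have htα : ContinuousAt (fun t : ℝ => t ^ α) 0 :=
        Real.continuousAt_rpow_const 0 α (Or.inr hα.le)
      have hφ : ContinuousAt (fun t : ℝ => GG α β s t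
          + β * s ^ α * (t ^ α * (1 + (s * t) ^ α) ^ (-(β / α) - 1))) 0 :=
        hGGc.add ((continuousAt_const.mul (htα.mul hZc)))
      apply ContinuousWithinAt.congr hφ.continuousWithinAt
      · intro t ht
        have ht0 : (0:ℝ) ≤ t := ht
        simp only [hF, GP, sub_zero]
        rw [show t * (-(β * s ^ α) * (t ^ (α - 1) * (1 + (s * t) ^ α) ^ (-(β / α) - 1)))
            = -(β * s ^ α) * ((t * t ^ (α - 1)) * (1 + (s * t) ^ α) ^ (-(β / α) - 1)) by ring,
          mul_rpow_sub_one hα ht0]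
        ring
      · simp only [hF, GP, sub_zero]
        rw [show (0:ℝ) * (-(β * s ^ α) * ((0:ℝ) ^ (α - 1) * (1 + (s * 0) ^ α) ^ (-(β / α) - 1)))
            = -(β * s ^ α) * (((0:ℝ) * (0:ℝ) ^ (α - 1)) * (1 + (s * 0) ^ α) ^ (-(β / α) - 1)) by ring,
          mul_rpow_sub_one hα le_rfl, Real.zero_rpow hα.ne']
        ring
    · have c1 : ContinuousAt (GG α β s) r := (hasDerivAt_GG (β := β) hα hs h0).continuousAt
      have c2 : ContinuousAt (GP α β s) r := (hasDerivAt_GP (β := β) hα hs h0).continuousAt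
      exact (c1.sub (((continuousAt_id.sub continuousAt_const)).mul c2)).continuousWithinAt
  have htend : Filter.Tendsto F Filter.atTop (nhds 0) := tendsto_F hr hα hβ hs
  have key := integral_Ioi_of_hasDerivAt_of_tendsto hcont hderiv hintr htend
  rw [integral_neg] at key
  have hFr : F r = GG α β s r := by simp [hF]
  have h2 : ∫ t in Ioi r, (t - r) * HH α β s t = GG α β s r := by
    rw [hFr] at key
    linarith
  rw [← Ioc_union_Ioi_eq_Ioi hr, setIntegral_union (Ioc_disjoint_Ioi le_rfl)
    measurableSet_Ioi (baseI.mono_set (Ioc_subset_Ioi_self.trans (Ioi_subset_Ioi le_rfl)))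
    (baseI.mono_set (Ioi_subset_Ioi hr))]
  have hz : ∫ t in Ioc (0:ℝ) r, max (t - r) 0 * HH α β s t = 0 := by
    have heq : EqOn (fun t => max (t - r) 0 * HH α β s t) (fun _ => (0:ℝ)) (Ioc 0 r) := by
      intro t ht
      simp only
      rw [max_eq_right (by linarith [ht.2] : t - r ≤ 0), zero_mul]
    rw [setIntegral_congr_fun measurableSet_Ioc heq, integral_zero]
  rw [hz, zero_add,
    setIntegral_congr_fun measurableSet_Ioi
      (fun t (ht : r < t) => by
        show max (t - r) 0 * HH α β s t = (t - r) * HH α β s t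
        rw [max_eq_left (by linarith : (0:ℝ) ≤ t - r)]),
    h2]

lemma integrable_tent_HH {α β s : ℝ} (hα : 0 < α) (hα2 : α ≤ 2) (hβ : 0 < β) (hs : 0 < s)
    {r : ℝ} (hr : 0 ≤ r) (c : ℝ) :
    IntegrableOn (fun t => max (t - r) 0 * (c * HH α β s t)) (Ioi (0:ℝ)) := by
  have h := (integrable_tent hα hα2 hβ hs hr).const_mul (c * (β * s ^ α))
  have hfun : (fun t => max (t - r) 0 * (c * HH α β s t))
      = fun t => (c * (β * s ^ α)) * (max (t - r) 0 * (t ^ (α - 2) * p1 α β s t)) := by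
    funext t; rw [HH]; ring
  rw [hfun]; exact h

lemma repr_entry {α β s : ℝ} (hα : 0 < α) (hα2 : α ≤ 2) (hβ : 0 < β) (hs : 0 < s)
    {r : ℝ} (hr : 0 ≤ r) (c : ℝ) :
    c * GG α β s r = ∫ t in Ioi (0:ℝ), max (t - r) 0 * (c * HH α β s t) := by
  rw [← repr_GG hα hα2 hβ hs hr, ← MeasureTheory.integral_const_mul]
  congr 1
  funext t
  ring

lemma HH_nonneg {α β s t : ℝ} (hα : 0 < α) (hα1 : α ≤ 1) (hβ : 0 < β) (hs : 0 < s)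
    (ht : 0 < t) : 0 ≤ HH α β s t := by
  rw [HH]
  have h1 := p1_nonneg hα hα1 hβ hs ht
  have h2 : (0:ℝ) ≤ t ^ (α - 2) := (Real.rpow_pos_of_pos ht _).le
  have h3 : (0:ℝ) ≤ s ^ α := (Real.rpow_pos_of_pos hs _).le
  positivity

lemma det_cond (σ1 σ2 s11 s12 s22 α11 α12 α22 β11 β12 β22 ρ : ℝ)
    (hσ1 : 0 < σ1) (hσ2 : 0 < σ2)
    (hs11 : 0 < s11) (hs12 : 0 < s12) (hs22 : 0 < s22)
    (hα11 : α11 ∈ Ioc (0 : ℝ) 1) (hα22 : α22 ∈ Ioc (0 : ℝ) 1)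
    (hα12 : α12 ∈ Ioc (0 : ℝ) 2)
    (hβ11 : 0 < β11) (hβ12 : 0 < β12) (hβ22 : 0 < β22)
    (hρ2 : ρ ^ 2 ≤ β11 * β22 / β12 ^ 2 * (s11 ^ α11 * s22 ^ α22 / s12 ^ (2 * α12)) *
      sInf ((fun r : ℝ =>
          r ^ (α11 + α22 - 2 * α12) *
            (p1 α11 β11 s11 r * p1 α22 β22 s22 r) / (p1 α12 β12 s12 r) ^ 2) ''
        {r : ℝ | 0 < r ∧ p1 α12 β12 s12 r ≠ 0}))
    {t : ℝ} (ht : 0 < t) :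
    (ρ * σ1 * σ2 * HH α12 β12 s12 t) ^ 2
      ≤ (σ1 ^ 2 * HH α11 β11 s11 t) * (σ2 ^ 2 * HH α22 β22 s22 t) := by
  have hA : 0 ≤ σ1 ^ 2 * HH α11 β11 s11 t :=
    mul_nonneg (sq_nonneg _) (HH_nonneg hα11.1 hα11.2 hβ11 hs11 ht)
  have hC : 0 ≤ σ2 ^ 2 * HH α22 β22 s22 t :=
    mul_nonneg (sq_nonneg _) (HH_nonneg hα22.1 hα22.2 hβ22 hs22 ht)
  by_cases hz : p1 α12 β12 s12 t = 0
  · have : HH α12 β12 s12 t = 0 := by rw [HH, hz]; ring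
    rw [this]
    simpa using mul_nonneg hA hC
  · -- t belongs to the infimum set
    have hbdd : BddBelow ((fun r : ℝ =>
        r ^ (α11 + α22 - 2 * α12) *
          (p1 α11 β11 s11 r * p1 α22 β22 s22 r) / (p1 α12 β12 s12 r) ^ 2) ''
        {r : ℝ | 0 < r ∧ p1 α12 β12 s12 r ≠ 0}) := by
      refine ⟨0, fun z hzmem => ?_⟩
      obtain ⟨r, ⟨hr0, hrne⟩, rfl⟩ := hzmem
      apply div_nonneg _ (sq_nonneg _)
      exact mul_nonneg (Real.rpow_nonneg hr0.le _)
        (mul_nonneg (p1_nonneg hα11.1 hα11.2 hβ11 hs11 hr0)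
          (p1_nonneg hα22.1 hα22.2 hβ22 hs22 hr0))
    set w : ℝ := t ^ (α11 + α22 - 2 * α12) *
        (p1 α11 β11 s11 t * p1 α22 β22 s22 t) / (p1 α12 β12 s12 t) ^ 2 with hwdef
    have hmem : w ∈ ((fun r : ℝ =>
        r ^ (α11 + α22 - 2 * α12) *
          (p1 α11 β11 s11 r * p1 α22 β22 s22 r) / (p1 α12 β12 s12 r) ^ 2) ''
        {r : ℝ | 0 < r ∧ p1 α12 β12 s12 r ≠ 0}) := ⟨t, ⟨ht, hz⟩, rfl⟩
    have hsle := csInf_le hbdd hmem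
    have hs12p : (0:ℝ) < s12 ^ (2 * α12) := Real.rpow_pos_of_pos hs12 _
    have hcpos : 0 ≤ β11 * β22 / β12 ^ 2 * (s11 ^ α11 * s22 ^ α22 / s12 ^ (2 * α12)) := by
      apply mul_nonneg (div_nonneg (by positivity) (sq_nonneg _))
      exact div_nonneg (mul_nonneg (Real.rpow_pos_of_pos hs11 _).le
        (Real.rpow_pos_of_pos hs22 _).le) hs12p.le
    have hρw : ρ ^ 2 ≤ β11 * β22 / β12 ^ 2 *
        (s11 ^ α11 * s22 ^ α22 / s12 ^ (2 * α12)) * w :=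
      le_trans hρ2 (mul_le_mul_of_nonneg_left hsle hcpos)
    -- algebra
    set P1 := p1 α11 β11 s11 t
    set P2 := p1 α22 β22 s22 t
    set P12 := p1 α12 β12 s12 t
    have hP12sq : (0:ℝ) < P12 ^ 2 := by positivity
    have htp : (0:ℝ) < t ^ (α12 - 2) := Real.rpow_pos_of_pos ht _
    have hE : (0:ℝ) < t ^ (α11 + α22 - 2 * α12) := Real.rpow_pos_of_pos ht _
    have e : t ^ (α11 + α22 - 2 * α12) * (t ^ (α12 - 2) * t ^ (α12 - 2))
        = t ^ (α11 - 2) * t ^ (α22 - 2) := by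
      rw [← Real.rpow_add ht (α12 - 2) (α12 - 2),
        ← Real.rpow_add ht (α11 + α22 - 2 * α12) ((α12 - 2) + (α12 - 2)),
        ← Real.rpow_add ht (α11 - 2) (α22 - 2)]
      congr 1
      ring
    have hs12sq : s12 ^ α12 * s12 ^ α12 = s12 ^ (2 * α12) := by
      rw [← Real.rpow_add hs12]
      congr 1
      ring
    have hM : (0:ℝ) < σ1 ^ 2 * σ2 ^ 2 * β12 ^ 2 * s12 ^ (2 * α12) *
        (t ^ (α12 - 2) * t ^ (α12 - 2)) * P12 ^ 2 := by positivity
    have hcwM : (β11 * β22 / β12 ^ 2 * (s11 ^ α11 * s22 ^ α22 / s12 ^ (2 * α12)) * w) *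
        (σ1 ^ 2 * σ2 ^ 2 * β12 ^ 2 * s12 ^ (2 * α12) *
          (t ^ (α12 - 2) * t ^ (α12 - 2)) * P12 ^ 2)
        = σ1 ^ 2 * σ2 ^ 2 * (β11 * β22) * (s11 ^ α11 * s22 ^ α22) *
          ((t ^ (α11 + α22 - 2 * α12) * (t ^ (α12 - 2) * t ^ (α12 - 2))) * (P1 * P2)) := by
      rw [hwdef]
      field_simp
    rw [e] at hcwM
    simp only [HH]
    calc (ρ * σ1 * σ2 * (β12 * s12 ^ α12 * (t ^ (α12 - 2) * P12))) ^ 2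
        = ρ ^ 2 * (σ1 ^ 2 * σ2 ^ 2 * β12 ^ 2 * (s12 ^ α12 * s12 ^ α12) *
            (t ^ (α12 - 2) * t ^ (α12 - 2)) * P12 ^ 2) := by ring
      _ = ρ ^ 2 * (σ1 ^ 2 * σ2 ^ 2 * β12 ^ 2 * s12 ^ (2 * α12) *
            (t ^ (α12 - 2) * t ^ (α12 - 2)) * P12 ^ 2) := by rw [hs12sq]
      _ ≤ (β11 * β22 / β12 ^ 2 * (s11 ^ α11 * s22 ^ α22 / s12 ^ (2 * α12)) * w) *
            (σ1 ^ 2 * σ2 ^ 2 * β12 ^ 2 * s12 ^ (2 * α12) *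
              (t ^ (α12 - 2) * t ^ (α12 - 2)) * P12 ^ 2) :=
          mul_le_mul_of_nonneg_right hρw hM.le
      _ = σ1 ^ 2 * σ2 ^ 2 * (β11 * β22) * (s11 ^ α11 * s22 ^ α22) *
            ((t ^ (α11 - 2) * t ^ (α22 - 2)) * (P1 * P2)) := hcwM
      _ = (σ1 ^ 2 * (β11 * s11 ^ α11 * (t ^ (α11 - 2) * P1))) *
            (σ2 ^ 2 * (β22 * s22 ^ α22 * (t ^ (α22 - 2) * P2))) := by ring

lemma dot_expand (A B C : ℝ) (u v : Fin 2 → ℝ) :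
    u ⬝ᵥ (!![A, B; B, C]).mulVec v
    = A * (u 0 * v 0) + B * (u 0 * v 1) + B * (u 1 * v 0) + C * (u 1 * v 1) := by
  simp [Matrix.mulVec, dotProduct, Fin.sum_univ_two, Matrix.vecHead, Matrix.vecTail]
  ring

/-- Sufficient condition for positive definiteness of the bivariate generalized Cauchy
model in `ℝ`. -/
theorem bivariate_generalized_cauchy_posDef_R1
    (σ1 σ2 s11 s12 s22 α11 α12 α22 β11 β12 β22 ρ : ℝ)
    (hσ1 : 0 < σ1) (hσ2 : 0 < σ2)
    (hs11 : 0 < s11) (hs12 : 0 < s12) (hs22 : 0 < s22)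
    (hα11 : α11 ∈ Ioc (0 : ℝ) 1) (hα22 : α22 ∈ Ioc (0 : ℝ) 1)
    (hα12 : α12 ∈ Ioc (0 : ℝ) 2)
    (hβ11 : 0 < β11) (hβ12 : 0 < β12) (hβ22 : 0 < β22)
    (hρ : ρ ∈ Icc (-1 : ℝ) 1)
    (hρ2 : ρ ^ 2 ≤ β11 * β22 / β12 ^ 2 * (s11 ^ α11 * s22 ^ α22 / s12 ^ (2 * α12)) *
      sInf ((fun r : ℝ =>
          r ^ (α11 + α22 - 2 * α12) *
            (p1 α11 β11 s11 r * p1 α22 β22 s22 r) / (p1 α12 β12 s12 r) ^ 2) ''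
        {r : ℝ | 0 < r ∧ p1 α12 β12 s12 r ≠ 0})) :
    PosDefIn 1 (fun r =>
      !![σ1 ^ 2 * (1 + (s11 * r) ^ α11) ^ (-(β11 / α11)),
         ρ * σ1 * σ2 * (1 + (s12 * r) ^ α12) ^ (-(β12 / α12));
         ρ * σ1 * σ2 * (1 + (s12 * r) ^ α12) ^ (-(β12 / α12)),
         σ2 ^ 2 * (1 + (s22 * r) ^ α22) ^ (-(β22 / α22))]) := by
  intro p x a
  set y : Fin p → ℝ := fun i => x i 0 with hy
  have hnorm : ∀ i j, ‖x i - x j‖ = |y i - y j| := by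
    intro i j
    rw [EuclideanSpace.norm_eq]
    simp [Real.sqrt_sq_eq_abs, hy]
  set fA : ℝ → ℝ := fun t => σ1 ^ 2 * HH α11 β11 s11 t with hfA
  set fB : ℝ → ℝ := fun t => ρ * σ1 * σ2 * HH α12 β12 s12 t with hfB
  set fC : ℝ → ℝ := fun t => σ2 ^ 2 * HH α22 β22 s22 t with hfC
  set g : Fin p → Fin p → ℝ → ℝ := fun i j t =>
    max (t - |y i - y j|) 0 *
      (fA t * (a i 0 * a j 0) + fB t * (a i 0 * a j 1) + fB t * (a i 1 * a j 0)
        + fC t * (a i 1 * a j 1)) with hg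
  have h2le : α11 ≤ 2 := le_trans hα11.2 one_le_two
  have h2le' : α22 ≤ 2 := le_trans hα22.2 one_le_two
  have habs : ∀ i j : Fin p, (0:ℝ) ≤ |y i - y j| := fun i j => abs_nonneg _
  -- integrability of each summand
  have hint : ∀ i j : Fin p, IntegrableOn (g i j) (Ioi (0:ℝ)) := by
    intro i j
    have h1 := integrable_tent_HH hα11.1 h2le hβ11 hs11 (habs i j)
      (σ1 ^ 2 * (a i 0 * a j 0))
    have h2 := integrable_tent_HH hα12.1 hα12.2 hβ12 hs12 (habs i j)
      (ρ * σ1 * σ2 * (a i 0 * a j 1))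
    have h3 := integrable_tent_HH hα12.1 hα12.2 hβ12 hs12 (habs i j)
      (ρ * σ1 * σ2 * (a i 1 * a j 0))
    have h4 := integrable_tent_HH hα22.1 h2le' hβ22 hs22 (habs i j)
      (σ2 ^ 2 * (a i 1 * a j 1))
    have h : IntegrableOn (fun t =>
        max (t - |y i - y j|) 0 * (σ1 ^ 2 * (a i 0 * a j 0) * HH α11 β11 s11 t)
        + max (t - |y i - y j|) 0 * (ρ * σ1 * σ2 * (a i 0 * a j 1) * HH α12 β12 s12 t)
        + max (t - |y i - y j|) 0 * (ρ * σ1 * σ2 * (a i 1 * a j 0) * HH α12 β12 s12 t)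
        + max (t - |y i - y j|) 0 * (σ2 ^ 2 * (a i 1 * a j 1) * HH α22 β22 s22 t))
        (Ioi (0:ℝ)) := ((h1.add h2).add h3).add h4
    apply MeasureTheory.IntegrableOn.congr_fun h _ measurableSet_Ioi
    intro t ht
    simp only [hg, hfA, hfB, hfC]
    ring
  -- each summand is an integral
  have hentry : ∀ i j : Fin p,
      a i ⬝ᵥ (!![σ1 ^ 2 * (1 + (s11 * ‖x i - x j‖) ^ α11) ^ (-(β11 / α11)),
         ρ * σ1 * σ2 * (1 + (s12 * ‖x i - x j‖) ^ α12) ^ (-(β12 / α12));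
         ρ * σ1 * σ2 * (1 + (s12 * ‖x i - x j‖) ^ α12) ^ (-(β12 / α12)),
         σ2 ^ 2 * (1 + (s22 * ‖x i - x j‖) ^ α22) ^ (-(β22 / α22))]).mulVec (a j)
      = ∫ t in Ioi (0:ℝ), g i j t := by
    intro i j
    rw [dot_expand, hnorm i j]
    set r := |y i - y j| with hrdef
    have hr : (0:ℝ) ≤ r := abs_nonneg _
    have e1 : σ1 ^ 2 * (1 + (s11 * r) ^ α11) ^ (-(β11 / α11)) * (a i 0 * a j 0)
        = (σ1 ^ 2 * (a i 0 * a j 0)) * GG α11 β11 s11 r := by rw [GG]; ring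
    have e2 : ρ * σ1 * σ2 * (1 + (s12 * r) ^ α12) ^ (-(β12 / α12)) * (a i 0 * a j 1)
        = (ρ * σ1 * σ2 * (a i 0 * a j 1)) * GG α12 β12 s12 r := by rw [GG]; ring
    have e3 : ρ * σ1 * σ2 * (1 + (s12 * r) ^ α12) ^ (-(β12 / α12)) * (a i 1 * a j 0)
        = (ρ * σ1 * σ2 * (a i 1 * a j 0)) * GG α12 β12 s12 r := by rw [GG]; ring
    have e4 : σ2 ^ 2 * (1 + (s22 * r) ^ α22) ^ (-(β22 / α22)) * (a i 1 * a j 1)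
        = (σ2 ^ 2 * (a i 1 * a j 1)) * GG α22 β22 s22 r := by rw [GG]; ring
    rw [e1, e2, e3, e4,
      repr_entry hα11.1 h2le hβ11 hs11 hr (σ1 ^ 2 * (a i 0 * a j 0)),
      repr_entry hα12.1 hα12.2 hβ12 hs12 hr (ρ * σ1 * σ2 * (a i 0 * a j 1)),
      repr_entry hα12.1 hα12.2 hβ12 hs12 hr (ρ * σ1 * σ2 * (a i 1 * a j 0)),
      repr_entry hα22.1 h2le' hβ22 hs22 hr (σ2 ^ 2 * (a i 1 * a j 1))]
    have H1 := integrable_tent_HH hα11.1 h2le hβ11 hs11 hr (σ1 ^ 2 * (a i 0 * a j 0))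
    have H2 := integrable_tent_HH hα12.1 hα12.2 hβ12 hs12 hr (ρ * σ1 * σ2 * (a i 0 * a j 1))
    have H3 := integrable_tent_HH hα12.1 hα12.2 hβ12 hs12 hr (ρ * σ1 * σ2 * (a i 1 * a j 0))
    have H4 := integrable_tent_HH hα22.1 h2le' hβ22 hs22 hr (σ2 ^ 2 * (a i 1 * a j 1))
    have H12 : IntegrableOn (fun t =>
        max (t - r) 0 * (σ1 ^ 2 * (a i 0 * a j 0) * HH α11 β11 s11 t)
        + max (t - r) 0 * (ρ * σ1 * σ2 * (a i 0 * a j 1) * HH α12 β12 s12 t))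
        (Ioi (0:ℝ)) := H1.add H2
    have H123 : IntegrableOn (fun t =>
        max (t - r) 0 * (σ1 ^ 2 * (a i 0 * a j 0) * HH α11 β11 s11 t)
        + max (t - r) 0 * (ρ * σ1 * σ2 * (a i 0 * a j 1) * HH α12 β12 s12 t)
        + max (t - r) 0 * (ρ * σ1 * σ2 * (a i 1 * a j 0) * HH α12 β12 s12 t))
        (Ioi (0:ℝ)) := H12.add H3
    have hgeq : g i j = fun t =>
        max (t - r) 0 * (σ1 ^ 2 * (a i 0 * a j 0) * HH α11 β11 s11 t)
        + max (t - r) 0 * (ρ * σ1 * σ2 * (a i 0 * a j 1) * HH α12 β12 s12 t)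
        + max (t - r) 0 * (ρ * σ1 * σ2 * (a i 1 * a j 0) * HH α12 β12 s12 t)
        + max (t - r) 0 * (σ2 ^ 2 * (a i 1 * a j 1) * HH α22 β22 s22 t) := by
      funext t
      simp only [hg, hfA, hfB, hfC, hrdef]
      ring
    rw [hgeq, MeasureTheory.integral_add H123 H4, MeasureTheory.integral_add H12 H3,
      MeasureTheory.integral_add H1 H2]
  calc (0:ℝ) ≤ ∫ t in Ioi (0:ℝ), ∑ i : Fin p, ∑ j : Fin p, g i j t := by
        apply setIntegral_nonneg measurableSet_Ioi
        intro t ht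
        have hApos : 0 ≤ fA t :=
          mul_nonneg (sq_nonneg _) (HH_nonneg hα11.1 hα11.2 hβ11 hs11 ht)
        have hCpos : 0 ≤ fC t :=
          mul_nonneg (sq_nonneg _) (HH_nonneg hα22.1 hα22.2 hβ22 hs22 ht)
        have hB2 : (fB t) ^ 2 ≤ fA t * fC t :=
          det_cond σ1 σ2 s11 s12 s22 α11 α12 α22 β11 β12 β22 ρ hσ1 hσ2 hs11 hs12 hs22
            hα11 hα22 hα12 hβ11 hβ12 hβ22 hρ2 ht
        have := schur_step p (fun i j => max (t - |y i - y j|) 0)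
          (fun b => tent_kernel p y b t) (fA t) (fB t) (fC t) hApos hCpos hB2
          (fun i => a i 0) (fun i => a i 1)
        simpa [hg] using this
    _ = ∑ i : Fin p, ∑ j : Fin p, ∫ t in Ioi (0:ℝ), g i j t := by
        rw [MeasureTheory.integral_finset_sum _
          (fun i _ => integrable_finset_sum _ (fun j _ => hint i j))]
        exact Finset.sum_congr rfl fun i _ =>
          MeasureTheory.integral_finset_sum _ (fun j _ => hint i j)
    _ = _ := by
        refine Finset.sum_congr rfl fun i _ => Finset.sum_congr rfl fun j _ => ?_
        rw [hentry i j]
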